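/- Let n ≥ 1 and for i = 1, …, n let e_i = (1, 1, …, 1) − n·δ_i ∈ ℤⁿ, where δ_i is the i-th standard basis vector (so e_i has −(n−1) in position i and 1 elsewhere). A point x ∈ ℤⁿ has pairwise distinct coordinates modulo n if and only if there exist integers t₁, …, tₙ and a permutation π of {1, …, n} such that x = t₁e₁ + ⋯ + t_{n−1}e_{n−1} + tₙ·(1, 1, …, 1) + (π(1), π(2), …, π(n)). -/

import Mathlib

/-- For `i ∈ {1, …, n}`, the vector `eᵢ = (1, 1, …, 1) - n·δᵢ ∈ ℤⁿ`, which has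
`-(n-1)` in position `i` and `1` elsewhere. -/
def eVec (n : ℕ) (i : Fin n) : Fin n → ℤ :=
  (fun _ => 1) - (n : ℤ) • Pi.single i 1

lemma eVec_apply (n : ℕ) (i j : Fin n) :
    eVec n i j = 1 - (n : ℤ) * (if j = i then 1 else 0) := by
  simp [eVec, Pi.single_apply]

/-- A point `x ∈ ℤⁿ` has pairwise distinct coordinates modulo `n` if and only
if there exist integers `t₁, …, tₙ` and a permutation `π` of `{1, …, n}` such
that `x = t₁e₁ + ⋯ + t_{n-1}e_{n-1} + tₙ·(1, …, 1) + (π(1), …, π(n))`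
(the last summand being a vertex of the `(n-1)`-dimensional permutohedron). -/
theorem stmt_15 (n : ℕ) (hn : 1 ≤ n) (x : Fin n → ℤ) :
    Function.Injective (fun i : Fin n => ((x i : ZMod n))) ↔
      ∃ (t : Fin n → ℤ) (π : Equiv.Perm (Fin n)),
        x = (∑ i ∈ Finset.univ.filter (fun i : Fin n => (i : ℕ) < n - 1),
              t i • eVec n i)
            + t ⟨n - 1, by omega⟩ • (fun _ => (1 : ℤ))
            + (fun i => ((π i : ℕ) : ℤ) + 1) := by
  have hne : NeZero n := ⟨by omega⟩
  set F : Finset (Fin n) :=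
    Finset.univ.filter (fun i : Fin n => (i : ℕ) < n - 1) with hF
  set last : Fin n := ⟨n - 1, by omega⟩ with hlastdef
  have hlast_notF : last ∉ F := by simp [hF, hlastdef]
  have hmemF : ∀ j : Fin n, j ∈ F ↔ j ≠ last := by
    intro j
    simp only [hF, Finset.mem_filter, Finset.mem_univ, true_and]
    constructor
    · intro h heq; rw [heq] at h; simp [hlastdef] at h
    · intro h
      have : (j : ℕ) ≠ n - 1 := fun hc => h (Fin.ext hc)
      have := j.isLt; omega
  constructor
  · intro hinj
    -- define the permutation
    have ginj : Function.Injective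
        (fun i : Fin n => (⟨(x i - 1 : ZMod n).val, ZMod.val_lt _⟩ : Fin n)) := by
      intro a b hab
      have hv : ((x a : ZMod n) - 1).val = ((x b : ZMod n) - 1).val :=
        congrArg Fin.val hab
      have : ((x a : ZMod n) - 1) = ((x b : ZMod n) - 1) := by
        have := ZMod.val_injective n hv
        exact this
      have : (x a : ZMod n) = (x b : ZMod n) := by linear_combination this
      exact hinj this
    let π : Equiv.Perm (Fin n) :=
      Equiv.ofBijective _ (Finite.injective_iff_bijective.mp ginj)
    have hπ : ∀ i, ((π i : ℕ) : ZMod n) = (x i : ZMod n) - 1 := by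
      intro i
      show ((((x i - 1 : ZMod n)).val : ℕ) : ZMod n) = _
      exact ZMod.natCast_rightInverse _
    have hdvd : ∀ i, ∃ s : ℤ, x i - (((π i : ℕ) : ℤ) + 1) = n * s := by
      intro i
      have : (((x i - (((π i : ℕ) : ℤ) + 1)) : ℤ) : ZMod n) = 0 := by
        push_cast
        rw [hπ i]; ring
      obtain ⟨s, hs⟩ := (ZMod.intCast_zmod_eq_zero_iff_dvd _ _).mp this
      exact ⟨s, hs⟩
    choose s hs using hdvd
    refine ⟨fun i => if i = last then (n : ℤ) * s last - ∑ j ∈ F, (s last - s j)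
        else s last - s i, π, ?_⟩
    set t : Fin n → ℤ := fun i => if i = last then
        (n : ℤ) * s last - ∑ j ∈ F, (s last - s j) else s last - s i with ht
    funext j
    simp only [Pi.add_apply, Finset.sum_apply, Pi.smul_apply, smul_eq_mul,
      eVec_apply]
    have hsum : ∀ i ∈ F, t i * (1 - (n : ℤ) * (if j = i then 1 else 0))
        = t i - (n : ℤ) * (if j = i then t i else 0) := by
      intro i _; split <;> ring
    rw [Finset.sum_congr rfl hsum, Finset.sum_sub_distrib, ← Finset.mul_sum,
      Finset.sum_ite_eq]
    have htF : ∀ i ∈ F, t i = s last - s i := by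
      intro i hi
      have : i ≠ last := (hmemF i).mp hi
      simp [ht, this]
    rw [Finset.sum_congr rfl htF]
    have htlast : t last = (n : ℤ) * s last - ∑ j ∈ F, (s last - s j) := by
      simp [ht]
    rw [htlast]
    by_cases hj : j ∈ F
    · have hjt : t j = s last - s j := htF j hj
      simp only [hj, if_pos, hjt]
      have := hs j
      have hjlast := hs last
      linarith [hs j]
    · have : j = last := by
        by_contra h
        exact hj ((hmemF j).mpr h)
      subst this
      simp only [hj, if_neg, not_false_iff]
      have hl := hs last
      push_cast at hl ⊢
      linarith
  · rintro ⟨t, π, rfl⟩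
    have key : ∀ j : Fin n,
        (((∑ i ∈ F, t i • eVec n i) + t last • (fun _ => (1:ℤ))
          + (fun i => ((π i : ℕ) : ℤ) + 1) : Fin n → ℤ) j : ZMod n)
        = (∑ i ∈ F, (t i : ZMod n)) + (t last : ZMod n)
          + (((π j : ℕ) : ZMod n) + 1) := by
      intro j
      simp only [Pi.add_apply, Finset.sum_apply, Pi.smul_apply, smul_eq_mul,
        eVec_apply]
      push_cast
      rw [ZMod.natCast_self]
      simp [mul_comm]
    intro a b hab
    simp only at hab
    rw [key a, key b] at hab
    have h2 : ((π a : ℕ) : ZMod n) = ((π b : ℕ) : ZMod n) := by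
      linear_combination hab
    have h3 : π a = π b := by
      have ha := ZMod.val_cast_of_lt (π a).isLt
      have hb := ZMod.val_cast_of_lt (π b).isLt
      apply Fin.ext
      rw [← ha, ← hb, h2]
    exact π.injective h3
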